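/- Theorem 1 (Budaghyan–Carlet): Let r = 2^m, s = 2^n, d ∈ F_{r^2} \ F_r, and c ∈ F_{r^2} such that y^{s+1} + c y^s + c^r y + 1 has no roots y ∈ μ_{r+1}. Then for every nonzero a ∈ F_{r^2} and every b ∈ F_{r^2}, the equation F(x+a) + F(x) = b has either 0 or exactly 2^k solutions x ∈ F_{r^2}, where k = gcd(m,n) and F(x) = x(x^s + x^r + c x^{rs}) + x^s(c^r x^r + d x^{rs}) + x^{(s+1)r}. -/

import Mathlib

private lemma fixIter {K : Type} [Monoid K] (l : K) (a : ℕ) (h : l ^ 2 ^ a = l) :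
    ∀ t, l ^ 2 ^ (a * t) = l
  | 0 => by simp
  | t + 1 => by
      rw [Nat.mul_succ, pow_add, pow_mul, fixIter l a h t, h]

private lemma fixGcd {K : Type} [Monoid K] : ∀ m n : ℕ, ∀ l : K,
    l ^ 2 ^ m = l → l ^ 2 ^ n = l → l ^ 2 ^ (Nat.gcd m n) = l := by
  intro m n
  induction m, n using Nat.gcd.induction with
  | H0 n => intro l _ h2; simpa using h2
  | H1 m n hm ih =>
    intro l h1 h2
    rw [Nat.gcd_rec]
    refine ih l ?_ h1
    have hdecomp : m * (n / m) + n % m = n := Nat.div_add_mod n m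
    calc l ^ 2 ^ (n % m) = (l ^ 2 ^ (m * (n / m))) ^ 2 ^ (n % m) := by
          rw [fixIter l m h1]
      _ = l ^ 2 ^ n := by rw [← pow_mul, ← pow_add, hdecomp]
      _ = l := h2

/-- Theorem 1 (Budaghyan–Carlet): if `y^{s+1} + c y^s + c^r y + 1` has no root in
`μ_{r+1}`, then every equation `F(x+a) + F(x) = b` with `a ≠ 0` has `0` or `2^{gcd(m,n)}`
solutions. -/
theorem stmt16 (m n : ℕ) (hm : 1 ≤ m) (hn : 1 ≤ n)
    (K : Type) [Field K] [Fintype K] (hcard : Fintype.card K = 2 ^ (2 * m))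
    (c d : K) (hd : d ^ (2 ^ m) ≠ d)
    (hc : ∀ y : K, y ^ (2 ^ m + 1) = 1 →
      y ^ (2 ^ n + 1) + c * y ^ (2 ^ n) + c ^ (2 ^ m) * y + 1 ≠ 0) :
    let r := 2 ^ m; let s := 2 ^ n
    let F : K → K := fun x =>
      x * (x ^ s + x ^ r + c * x ^ (r * s)) + x ^ s * (c ^ r * x ^ r + d * x ^ (r * s))
        + x ^ ((s + 1) * r)
    ∀ a : K, a ≠ 0 → ∀ b : K,
      {x : K | F (x + a) + F x = b}.ncard = 0 ∨
        {x : K | F (x + a) + F x = b}.ncard = 2 ^ Nat.gcd m n := by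
  intro r s F a ha b
  haveI : Fact (Nat.Prime 2) := ⟨Nat.prime_two⟩
  -- characteristic 2
  haveI hchar : CharP K 2 := by
    have hcp := ringChar.charP K
    obtain ⟨n0, hp, hq⟩ := FiniteField.card K (ringChar K)
    have h2 : ringChar K = 2 := by
      have hdvd : ringChar K ∣ 2 ^ (2 * m) := by
        rw [← hcard, hq]
        exact dvd_pow_self _ (by exact_mod_cast n0.ne_zero)
      have := hp.dvd_of_dvd_pow hdvd
      exact (Nat.prime_dvd_prime_iff_eq hp Nat.prime_two).mp this
    rwa [h2] at hcp
  have h20 : (2 : K) = 0 := CharTwo.two_eq_zero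
  have h2z : ∀ u : K, u + u = 0 := CharTwo.add_self_eq_zero
  have heq : ∀ u v : K, u + v = 0 → u = v := by
    intro u v h; linear_combination h - v * h20
  -- Frobenius helpers
  have hzr : r ≠ 0 := by positivity
  have hzs : s ≠ 0 := by positivity
  have fr : ∀ u v : K, (u + v) ^ r = u ^ r + v ^ r := fun u v => add_pow_char_pow u v 2 m
  have fs : ∀ u v : K, (u + v) ^ s = u ^ s + v ^ s := fun u v => add_pow_char_pow u v 2 n
  have hK : ∀ u : K, u ^ 2 ^ (2 * m) = u := by
    intro u; rw [← hcard]; exact FiniteField.pow_card u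
  have hrr : ∀ u : K, (u ^ r) ^ r = u := by
    intro u
    rw [← pow_mul, ← pow_add, ← two_mul]
    exact hK u
  -- F in atom form
  have hF : ∀ x : K, F x =
      x * (x ^ s + x ^ r + c * x ^ (r * s)) + x ^ s * (c ^ r * x ^ r + d * x ^ (r * s))
        + x ^ ((s + 1) * r) := fun _ => rfl
  have hF2 : ∀ x : K, F x =
      x * (x ^ s + x ^ r + c * (x ^ s) ^ r) + x ^ s * (c ^ r * x ^ r + d * (x ^ s) ^ r)
        + (x ^ s) ^ r * x ^ r := by
    intro x
    rw [hF x, mul_comm r s, pow_mul x s r, pow_mul x (s + 1) r, pow_succ x s, mul_pow]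
  -- key identity
  have key : ∀ x : K, F (x + a) + F x + F a =
      ((x ^ s * a + x * a ^ s + c * (x * (a ^ s) ^ r + a * (x ^ s) ^ r))
        + ((x ^ s) ^ r * a ^ r + x ^ r * (a ^ s) ^ r
            + c ^ r * (x ^ r * a ^ s + a ^ r * x ^ s)))
      + ((x * a ^ r + x ^ r * a)
          + d * (x ^ s * (a ^ s) ^ r + (x ^ s) ^ r * a ^ s)) := by
    intro x
    rw [hF2 (x + a), hF2 x, hF2 a]
    simp only [fs, fr]
    linear_combination (x * (x ^ s + x ^ r + c * (x ^ s) ^ r)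
      + x ^ s * (c ^ r * x ^ r + d * (x ^ s) ^ r) + (x ^ s) ^ r * x ^ r
      + a * (a ^ s + a ^ r + c * (a ^ s) ^ r)
      + a ^ s * (c ^ r * a ^ r + d * (a ^ s) ^ r) + (a ^ s) ^ r * a ^ r) * h20
  -- additivity
  have keyAdd : ∀ x y : K, F (x + y + a) + F (x + y) + F a =
      (F (x + a) + F x + F a) + (F (y + a) + F y + F a) := by
    intro x y
    rw [key (x + y), key x, key y]
    simp only [fs, fr]
    ring
  -- kernel characterization
  have hker : ∀ x : K, (F (x + a) + F x + F a = 0) ↔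
      (∃ l : K, l ^ r = l ∧ l ^ s = l ∧ x = l * a) := by
    intro x
    constructor
    · intro hx0
      rw [key x] at hx0
      have hx2 : ((((x ^ s) ^ r * a ^ r + x ^ r * (a ^ s) ^ r
            + c ^ r * (x ^ r * a ^ s + a ^ r * x ^ s))
          + (x ^ s * a + x * a ^ s + c * (x * (a ^ s) ^ r + a * (x ^ s) ^ r)))
          + ((x * a ^ r + x ^ r * a)
              + d ^ r * (x ^ s * (a ^ s) ^ r + (x ^ s) ^ r * a ^ s))) = 0 := by
        have h := congrArg (fun u : K => u ^ r) hx0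
        simp only [fr, mul_pow, hrr, zero_pow hzr] at h
        linear_combination h
      have hP1 : ((x ^ s * a + x * a ^ s + c * (x * (a ^ s) ^ r + a * (x ^ s) ^ r))
            + ((x ^ s) ^ r * a ^ r + x ^ r * (a ^ s) ^ r
              + c ^ r * (x ^ r * a ^ s + a ^ r * x ^ s))
            + (x * a ^ r + x ^ r * a))
          + d * (x ^ s * (a ^ s) ^ r + (x ^ s) ^ r * a ^ s) = 0 := by
        linear_combination hx0
      have hP2 : ((x ^ s * a + x * a ^ s + c * (x * (a ^ s) ^ r + a * (x ^ s) ^ r))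
            + ((x ^ s) ^ r * a ^ r + x ^ r * (a ^ s) ^ r
              + c ^ r * (x ^ r * a ^ s + a ^ r * x ^ s))
            + (x * a ^ r + x ^ r * a))
          + d ^ r * (x ^ s * (a ^ s) ^ r + (x ^ s) ^ r * a ^ s) = 0 := by
        linear_combination hx2
      have hdd : d * (x ^ s * (a ^ s) ^ r + (x ^ s) ^ r * a ^ s)
          = d ^ r * (x ^ s * (a ^ s) ^ r + (x ^ s) ^ r * a ^ s) :=
        (heq _ _ hP1).symm.trans (heq _ _ hP2)
      have hTS : x ^ s * (a ^ s) ^ r + (x ^ s) ^ r * a ^ s = 0 := by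
        by_contra hts
        exact hd (mul_right_cancel₀ hts hdd.symm)
      have hTX : x * a ^ r + x ^ r * a = 0 := by
        have hTXs : (x * a ^ r + x ^ r * a) ^ s
            = x ^ s * (a ^ s) ^ r + (x ^ s) ^ r * a ^ s := by
          simp only [fs, mul_pow]
          rw [pow_right_comm a r s, pow_right_comm x r s]
        exact (pow_eq_zero_iff hzs).mp (by rw [hTXs, hTS])
      have hH0 : (x ^ s * a + x * a ^ s + c * (x * (a ^ s) ^ r + a * (x ^ s) ^ r))
            + ((x ^ s) ^ r * a ^ r + x ^ r * (a ^ s) ^ r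
              + c ^ r * (x ^ r * a ^ s + a ^ r * x ^ s)) = 0 := by
        have h := heq _ _ hP1
        rw [hTS, mul_zero, hTX, add_zero] at h
        exact h
      have hxa : x * a ^ r = x ^ r * a := heq _ _ hTX
      have hlr' : (x * a⁻¹) ^ r = x * a⁻¹ := by
        rw [mul_pow, inv_pow]
        have har : a ^ r ≠ 0 := pow_ne_zero r ha
        field_simp
        linear_combination -hxa
      obtain ⟨l, hlr, hxl⟩ : ∃ l : K, l ^ r = l ∧ x = l * a :=
        ⟨x * a⁻¹, hlr', by field_simp⟩
      subst hxl
      have hlsr : (l ^ s) ^ r = l ^ s := by rw [pow_right_comm, hlr]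
      have hfact : ((l * a) ^ s * a + (l * a) * a ^ s
            + c * ((l * a) * (a ^ s) ^ r + a * ((l * a) ^ s) ^ r))
            + (((l * a) ^ s) ^ r * a ^ r + (l * a) ^ r * (a ^ s) ^ r
              + c ^ r * ((l * a) ^ r * a ^ s + a ^ r * (l * a) ^ s))
          = (l ^ s + l) * (a * a ^ s + c * (a * (a ^ s) ^ r)
              + (a ^ r * (a ^ s) ^ r + c ^ r * (a ^ r * a ^ s))) := by
        simp only [mul_pow, hlsr, hlr]
        ring
      rw [hfact] at hH0
      have hane : a ^ s ≠ 0 := pow_ne_zero s ha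
      have hy1 : (a ^ r * a⁻¹) ^ (r + 1) = 1 := by
        rw [pow_succ, mul_pow, inv_pow, hrr]
        field_simp
      have hW : (a ^ r * a⁻¹) ^ (s + 1) + c * (a ^ r * a⁻¹) ^ s
          + c ^ r * (a ^ r * a⁻¹) + 1 ≠ 0 := hc _ hy1
      have hEW : a * a ^ s + c * (a * (a ^ s) ^ r)
            + (a ^ r * (a ^ s) ^ r + c ^ r * (a ^ r * a ^ s))
          = (a * a ^ s) * ((a ^ r * a⁻¹) ^ (s + 1) + c * (a ^ r * a⁻¹) ^ s
              + c ^ r * (a ^ r * a⁻¹) + 1) := by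
        have hys : (a ^ r * a⁻¹) ^ s = (a ^ s) ^ r * (a ^ s)⁻¹ := by
          rw [mul_pow, inv_pow, pow_right_comm]
        rw [pow_succ, hys]
        field_simp
        ring
      rw [hEW] at hH0
      have hls0 : l ^ s + l = 0 := by
        rcases mul_eq_zero.mp hH0 with h | h
        · exact h
        · rcases mul_eq_zero.mp h with h' | h'
          · exact absurd h' (mul_ne_zero ha hane)
          · exact absurd h' hW
      exact ⟨l, hlr, heq _ _ hls0, rfl⟩
    · rintro ⟨l, hlr, hls, rfl⟩
      rw [key (l * a)]
      have hlsr : (l ^ s) ^ r = l ^ s := by rw [pow_right_comm, hlr]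
      simp only [mul_pow, hlsr, hlr, hls]
      linear_combination (l * (a * a ^ s) + c * (l * a * (a ^ s) ^ r)
        + l * (a ^ r * (a ^ s) ^ r) + c ^ r * (l * a ^ r * a ^ s)
        + l * a * a ^ r + d * (l * a ^ s * (a ^ s) ^ r)) * h20
  -- the fixed-point set
  have hg1 : 1 ≤ Nat.gcd m n := Nat.gcd_pos_of_pos_left n hm
  set g := Nat.gcd m n with hgdef
  have hSiff : ∀ l : K, (l ^ r = l ∧ l ^ s = l) ↔ l ^ 2 ^ g = l := by
    intro l
    constructor
    · rintro ⟨h1, h2⟩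
      exact fixGcd m n l h1 h2
    · intro h
      constructor
      · have := fixIter l g h (m / g)
        rwa [Nat.mul_div_cancel' (Nat.gcd_dvd_left m n)] at this
      · have := fixIter l g h (n / g)
        rwa [Nat.mul_div_cancel' (Nat.gcd_dvd_right m n)] at this
  -- cardinality of the fixed-point set
  have hS0card : {l : K | l ^ 2 ^ g = l}.ncard = 2 ^ g := by
    set N := 2 ^ g - 1 with hNdef
    have h2g : 2 ≤ 2 ^ g := by
      calc (2:ℕ) = 2 ^ 1 := (pow_one 2).symm
      _ ≤ 2 ^ g := Nat.pow_le_pow_right (by norm_num) hg1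
    have hN1 : N + 1 = 2 ^ g := Nat.sub_add_cancel (by omega)
    have hNpos : 0 < N := by omega
    have hNdvd : N ∣ Nat.card Kˣ := by
      have hgm : g ∣ 2 * m := (Nat.gcd_dvd_left m n).trans (dvd_mul_left m 2)
      obtain ⟨t, ht⟩ := hgm
      have : 2 ^ g - 1 ∣ (2 ^ g) ^ t - 1 ^ t := Nat.sub_dvd_pow_sub_pow (2 ^ g) 1 t
      rw [one_pow, ← pow_mul, ← ht] at this
      rw [Nat.card_units, Nat.card_eq_fintype_card, hcard]
      exact this
    obtain ⟨ζ, hζ⟩ := IsCyclic.exists_ofOrder_eq_natCard (α := Kˣ)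
    have hono : orderOf ζ ≠ 0 := by
      rw [hζ]
      exact Nat.card_pos.ne'
    have hξ : orderOf (ζ ^ (orderOf ζ / N)) = N :=
      orderOf_pow_orderOf_div hono (by rw [hζ]; exact hNdvd)
    have hpu : IsPrimitiveRoot (ζ ^ (orderOf ζ / N)) N := by
      have h := IsPrimitiveRoot.orderOf (ζ ^ (orderOf ζ / N))
      rwa [hξ] at h
    have hprim : IsPrimitiveRoot ((ζ ^ (orderOf ζ / N) : Kˣ) : K) N :=
      IsPrimitiveRoot.coe_units_iff.mpr hpu
    have hcardroots := hprim.card_nthRootsFinset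
    have hSeq : {l : K | l ^ 2 ^ g = l}
        = insert (0 : K) ↑(Polynomial.nthRootsFinset N (1 : K)) := by
      ext l
      simp only [Set.mem_setOf_eq, Set.mem_insert_iff, Finset.mem_coe,
        Polynomial.mem_nthRootsFinset hNpos (1 : K)]
      constructor
      · intro h
        by_cases hl : l = 0
        · exact Or.inl hl
        · right
          have : l ^ N * l = 1 * l := by
            rw [one_mul, ← pow_succ, hN1]
            exact h
          exact mul_right_cancel₀ hl this
      · rintro (rfl | h)
        · exact zero_pow (by positivity)
        · rw [← hN1, pow_succ, h, one_mul]
    rw [hSeq, Set.ncard_insert_of_notMem, Set.ncard_coe_finset, hcardroots, hN1]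
    · simp only [Finset.mem_coe, Polynomial.mem_nthRootsFinset hNpos (1 : K)]
      rw [zero_pow hNpos.ne']
      exact zero_ne_one
  -- final counting
  rcases Set.eq_empty_or_nonempty {x : K | F (x + a) + F x = b} with hE | ⟨x₀, hx₀⟩
  · left
    rw [hE, Set.ncard_empty]
  · right
    have hx₀' : F (x₀ + a) + F x₀ = b := hx₀
    have hEeq : {x : K | F (x + a) + F x = b}
        = (fun y => x₀ + y) '' {y : K | F (y + a) + F y + F a = 0} := by
      ext x
      simp only [Set.mem_setOf_eq, Set.mem_image]
      constructor
      · intro hx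
        refine ⟨x + x₀, ?_, ?_⟩
        · rw [keyAdd x x₀]
          rw [show F (x + a) + F x + F a = b + F a by rw [hx]]
          rw [show F (x₀ + a) + F x₀ + F a = b + F a by rw [hx₀']]
          exact h2z _
        · have : x₀ + (x + x₀) = x + (x₀ + x₀) := by ring
          rw [this, h2z, add_zero]
      · rintro ⟨y, hy, rfl⟩
        have h3 : F (x₀ + y + a) + F (x₀ + y) + F a = b + F a := by
          rw [keyAdd x₀ y, hy, add_zero]
          rw [show F (x₀ + a) + F x₀ + F a = b + F a by rw [hx₀']]
        exact add_right_cancel h3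
    have hker' : {y : K | F (y + a) + F y + F a = 0} = (fun l => l * a) '' {l : K | l ^ 2 ^ g = l} := by
      ext y
      simp only [Set.mem_setOf_eq, Set.mem_image]
      rw [hker y]
      constructor
      · rintro ⟨l, h1, h2, h3⟩
        exact ⟨l, (hSiff l).mp ⟨h1, h2⟩, h3.symm⟩
      · rintro ⟨l, h1, h2⟩
        obtain ⟨h3, h4⟩ := (hSiff l).mpr h1
        exact ⟨l, h3, h4, h2.symm⟩
    rw [hEeq, Set.ncard_image_of_injective _ (add_right_injective x₀), hker',
      Set.ncard_image_of_injective _ (mul_left_injective₀ ha), hS0card]
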